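/- arXiv:2310.20519 — 2 statements merged into one kernel-verified Lean document; each statement's English description precedes it below -/
import Mathlib

section
/- Let G₁ and G₂ be finite simple graphs that are both strongly regular with the same parameters (N, k, λ, μ), where k ≥ 1, and let M₁ = k⁻¹·A₁ and M₂ = k⁻¹·A₂ be their random-walk matrices. Then for every n ∈ ℕ the RRWP values are determined solely by the parameters and the adjacency type of the pair: (M₁ⁿ)_{u,u} = (M₂ⁿ)_{u',u'} for all vertices u of G₁ and u' of G₂; (M₁ⁿ)_{u,v} = (M₂ⁿ)_{u',v'} whenever u and v are adjacent in G₁ and u' and v' are adjacent in G₂; and (M₁ⁿ)_{u,v} = (M₂ⁿ)_{u',v'} whenever u ≠ v are non-adjacent in G₁ and u' ≠ v' are non-adjacent in G₂. Hence the relative random walk probability encodings cannot distinguish two strongly regular graphs with the same parameters. -/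
open Matrix

/-- Coefficient recursion for powers of the random-walk matrix of an SRG. -/
noncomputable def rrwpCoef (k ℓ μ : ℝ) : ℕ → ℝ × ℝ × ℝ
  | 0 => (1, 0, 0)
  | n + 1 =>
      let p := rrwpCoef k ℓ μ n
      (p.2.1, k⁻¹ * (p.1 + ℓ * p.2.1 + (k - 1 - ℓ) * p.2.2),
        k⁻¹ * (μ * p.2.1 + (k - μ) * p.2.2))

lemma srg_allOnes {V : Type*} [Fintype V] [DecidableEq V]
    (G : SimpleGraph V) [DecidableRel G.Adj] :
    (Matrix.of fun _ _ => (1 : ℝ)) = 1 + G.adjMatrix ℝ + Gᶜ.adjMatrix ℝ := by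
  ext i j
  simp only [of_apply, Matrix.add_apply, one_apply, SimpleGraph.adjMatrix_apply,
    SimpleGraph.compl_adj]
  by_cases h : i = j
  · simp [h]
  · by_cases ha : G.Adj i j <;> simp [h, ha]

lemma srg_adj_mul_allOnes {V : Type*} [Fintype V] [DecidableEq V]
    (G : SimpleGraph V) [DecidableRel G.Adj] {N k ℓ μ : ℕ}
    (h : G.IsSRGWith N k ℓ μ) :
    G.adjMatrix ℝ * (Matrix.of fun _ _ => (1 : ℝ)) =
      (k : ℝ) • (Matrix.of fun _ _ => (1 : ℝ)) := by
  ext i j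
  simp [h.regular i]

lemma srg_sq {V : Type*} [Fintype V] [DecidableEq V]
    (G : SimpleGraph V) [DecidableRel G.Adj] {N k ℓ μ : ℕ}
    (h : G.IsSRGWith N k ℓ μ) :
    G.adjMatrix ℝ * G.adjMatrix ℝ =
      (k : ℝ) • (1 : Matrix V V ℝ) + (ℓ : ℝ) • G.adjMatrix ℝ + (μ : ℝ) • Gᶜ.adjMatrix ℝ := by
  have h2 := h.matrix_eq (α := ℝ)
  rw [sq] at h2
  rw [h2]
  simp [Nat.cast_smul_eq_nsmul]

lemma srg_mul_compl {V : Type*} [Fintype V] [DecidableEq V]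
    (G : SimpleGraph V) [DecidableRel G.Adj] {N k ℓ μ : ℕ}
    (h : G.IsSRGWith N k ℓ μ) :
    G.adjMatrix ℝ * Gᶜ.adjMatrix ℝ =
      ((k : ℝ) - 1 - ℓ) • G.adjMatrix ℝ + ((k : ℝ) - μ) • Gᶜ.adjMatrix ℝ := by
  have hJ := srg_allOnes G
  have hAJ := srg_adj_mul_allOnes G h
  rw [hJ] at hAJ
  have hsq := srg_sq G h
  have hexp : G.adjMatrix ℝ * (1 + G.adjMatrix ℝ + Gᶜ.adjMatrix ℝ)
      = G.adjMatrix ℝ + G.adjMatrix ℝ * G.adjMatrix ℝ + G.adjMatrix ℝ * Gᶜ.adjMatrix ℝ := by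
    rw [mul_add, mul_add, mul_one]
  rw [hexp, hsq] at hAJ
  ext i j
  have := congrArg (fun M : Matrix V V ℝ => M i j) hAJ
  simp only [Matrix.add_apply, Matrix.smul_apply, smul_eq_mul, one_apply] at this ⊢
  linarith

lemma srg_pow_eq {V : Type*} [Fintype V] [DecidableEq V]
    (G : SimpleGraph V) [DecidableRel G.Adj] {N k ℓ μ : ℕ} (hk : 1 ≤ k)
    (h : G.IsSRGWith N k ℓ μ) (n : ℕ) :
    ((k : ℝ)⁻¹ • G.adjMatrix ℝ) ^ n =
      (rrwpCoef k ℓ μ n).1 • (1 : Matrix V V ℝ) +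
      (rrwpCoef k ℓ μ n).2.1 • G.adjMatrix ℝ +
      (rrwpCoef k ℓ μ n).2.2 • Gᶜ.adjMatrix ℝ := by
  have hk0 : (k : ℝ) ≠ 0 := by positivity
  induction n with
  | zero => simp [rrwpCoef]
  | succ n ih =>
      rw [pow_succ', ih]
      have hsq := srg_sq G h
      have hmc := srg_mul_compl G h
      simp only [rrwpCoef]
      ext i j
      have e1 : ∀ (X : Matrix V V ℝ) (a : ℝ),
          (((k : ℝ)⁻¹ • G.adjMatrix ℝ) * (a • X)) i j
            = (k : ℝ)⁻¹ * a * (G.adjMatrix ℝ * X) i j := by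
        intro X a
        simp [Matrix.smul_mul, Matrix.mul_smul, mul_comm, mul_assoc]
      simp only [mul_add, Matrix.add_apply, e1, mul_one, hsq, hmc, Matrix.smul_apply, smul_eq_mul,
        one_apply, SimpleGraph.adjMatrix_apply, SimpleGraph.compl_adj]
      field_simp
      split_ifs <;> ring

/-- RRWP encodings cannot distinguish two strongly regular graphs with the same
parameters `(N, k, ℓ, μ)`: for every step `n`, the entries of the `n`-th power of the
random-walk matrix `M = k⁻¹ • A` depend only on the parameters and on whether the pair of
vertices is equal, adjacent, or distinct non-adjacent. -/
theorem rrwp_cannot_distinguish_srg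
    {V₁ V₂ : Type*} [Fintype V₁] [DecidableEq V₁] [Fintype V₂] [DecidableEq V₂]
    (G₁ : SimpleGraph V₁) (G₂ : SimpleGraph V₂)
    [DecidableRel G₁.Adj] [DecidableRel G₂.Adj]
    (N k ℓ μ : ℕ) (hk : 1 ≤ k)
    (h₁ : G₁.IsSRGWith N k ℓ μ) (h₂ : G₂.IsSRGWith N k ℓ μ)
    (M₁ : Matrix V₁ V₁ ℝ) (M₂ : Matrix V₂ V₂ ℝ)
    (hM₁ : M₁ = (k : ℝ)⁻¹ • G₁.adjMatrix ℝ)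
    (hM₂ : M₂ = (k : ℝ)⁻¹ • G₂.adjMatrix ℝ) :
    ∀ n : ℕ,
      (∀ (u : V₁) (u' : V₂), (M₁ ^ n) u u = (M₂ ^ n) u' u') ∧
      (∀ (u v : V₁) (u' v' : V₂), G₁.Adj u v → G₂.Adj u' v' →
        (M₁ ^ n) u v = (M₂ ^ n) u' v') ∧
      (∀ (u v : V₁) (u' v' : V₂), u ≠ v → ¬ G₁.Adj u v → u' ≠ v' → ¬ G₂.Adj u' v' →
        (M₁ ^ n) u v = (M₂ ^ n) u' v') := by
  intro n
  subst hM₁ hM₂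
  have e₁ := srg_pow_eq G₁ hk h₁ n
  have e₂ := srg_pow_eq G₂ hk h₂ n
  rw [e₁, e₂]
  refine ⟨fun u u' => ?_, fun u v u' v' ha ha' => ?_, fun u v u' v' hne hna hne' hna' => ?_⟩
  · simp
  · simp [Matrix.add_apply, Matrix.smul_apply, one_apply_ne (G₁.ne_of_adj ha),
      one_apply_ne (G₂.ne_of_adj ha'), ha, ha', SimpleGraph.compl_adj,
      (G₁.ne_of_adj ha), (G₂.ne_of_adj ha')]
  · simp [Matrix.add_apply, Matrix.smul_apply, one_apply_ne hne, one_apply_ne hne',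
      hna, hna', SimpleGraph.compl_adj, hne, hne']
end

section
/- Let G be a finite simple graph on vertex set V that is strongly regular with parameters (N, k, λ, μ), k ≥ 1, and let M = k⁻¹·A be its random-walk matrix. Then for any two vertices u and u', the multiset over v ∈ V of the sequences (n ↦ (Mⁿ)_{u,v}) equals the multiset over v ∈ V of the sequences (n ↦ (Mⁿ)_{u',v}); that is, every vertex of a strongly regular graph sees the same multiset of full RRWP profiles, so the GD-WL colouring based on RRWP is constant across vertices. -/
open Matrix

lemma srg_pow_entry_cases
    {V : Type*} [Fintype V] [DecidableEq V]
    (G : SimpleGraph V) [DecidableRel G.Adj]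
    (N k ℓ μ : ℕ) (hk : 1 ≤ k) (h : G.IsSRGWith N k ℓ μ)
    (M : Matrix V V ℝ) (hM : M = (k : ℝ)⁻¹ • G.adjMatrix ℝ) :
    ∀ n : ℕ, ∃ A B C : ℝ, ∀ u v : V,
      (M ^ n) u v = if u = v then A else if G.Adj u v then B else C := by
  intro n
  induction n with
  | zero =>
    refine ⟨1, 0, 0, fun u v => ?_⟩
    rw [pow_zero, Matrix.one_apply]
    split_ifs <;> rfl
  | succ n ih =>
    obtain ⟨A, B, C, hn⟩ := ih
    have hstep : ∀ u v : V, (M ^ (n + 1)) u v =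
        (k : ℝ)⁻¹ * ∑ w ∈ G.neighborFinset v, (M ^ n) u w := by
      intro u v
      have hMp : M ^ (n + 1) = (k : ℝ)⁻¹ • (M ^ n * G.adjMatrix ℝ) := by
        rw [pow_succ]
        nth_rewrite 2 [hM]
        rw [Matrix.mul_smul]
      rw [hMp, Matrix.smul_apply, SimpleGraph.mul_adjMatrix_apply, smul_eq_mul]
    refine ⟨(k : ℝ)⁻¹ * (k * B),
      (k : ℝ)⁻¹ * (A + ℓ * B + ((k - 1 - ℓ : ℕ) : ℝ) * C),
      (k : ℝ)⁻¹ * (μ * B + ((k - μ : ℕ) : ℝ) * C), fun u v => ?_⟩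
    rw [hstep]
    by_cases huv : u = v
    · subst huv
      rw [if_pos rfl]
      congr 1
      have : ∀ w ∈ G.neighborFinset u, (M ^ n) u w = B := by
        intro w hw
        rw [SimpleGraph.mem_neighborFinset] at hw
        rw [hn, if_neg (G.ne_of_adj hw), if_pos hw]
      rw [Finset.sum_congr rfl this, Finset.sum_const,
        G.card_neighborFinset_eq_degree, h.regular u, nsmul_eq_mul]
    · rw [if_neg huv]
      by_cases hadj : G.Adj u v
      · rw [if_pos hadj]
        congr 1
        have hu : u ∈ G.neighborFinset v := by
          rw [SimpleGraph.mem_neighborFinset]; exact hadj.symm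
        set s := (G.neighborFinset v).erase u with hs
        have hins : G.neighborFinset v = insert u s := (Finset.insert_erase hu).symm
        rw [hins, Finset.sum_insert (Finset.notMem_erase u _)]
        have hself : (M ^ n) u u = A := by rw [hn, if_pos rfl]
        rw [hself]
        rw [← Finset.sum_filter_add_sum_filter_not s (fun w => G.Adj u w)]
        have hfil : s.filter (fun w => G.Adj u w) = (G.commonNeighbors u v).toFinset := by
          ext w
          simp only [hs, Finset.mem_filter, Finset.mem_erase,
            SimpleGraph.mem_neighborFinset, Set.mem_toFinset,
            SimpleGraph.mem_commonNeighbors]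
          constructor
          · rintro ⟨⟨_, hvw⟩, huw⟩; exact ⟨huw, hvw⟩
          · rintro ⟨huw, hvw⟩; exact ⟨⟨(G.ne_of_adj huw).symm, hvw⟩, huw⟩
        have hcard1 : (s.filter (fun w => G.Adj u w)).card = ℓ := by
          rw [hfil, Set.toFinset_card, h.of_adj u v hadj]
        have hB : ∀ w ∈ s.filter (fun w => G.Adj u w), (M ^ n) u w = B := by
          intro w hw
          rw [Finset.mem_filter] at hw
          rw [hn, if_neg (G.ne_of_adj hw.2), if_pos hw.2]
        have hC : ∀ w ∈ s.filter (fun w => ¬ G.Adj u w), (M ^ n) u w = C := by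
          intro w hw
          rw [Finset.mem_filter] at hw
          have hwne : u ≠ w := fun e => (Finset.mem_erase.mp (e ▸ hw.1)).1 rfl
          rw [hn, if_neg hwne, if_neg hw.2]
        have hcard2 : (s.filter (fun w => ¬ G.Adj u w)).card = k - 1 - ℓ := by
          have := Finset.card_filter_add_card_filter_not
            (s := s) (p := fun w => G.Adj u w)
          have hscard : s.card = k - 1 := by
            rw [hs, Finset.card_erase_of_mem hu, G.card_neighborFinset_eq_degree,
              h.regular v]
          omega
        rw [Finset.sum_congr rfl hB, Finset.sum_congr rfl hC,
          Finset.sum_const, Finset.sum_const, hcard1, hcard2,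
          nsmul_eq_mul, nsmul_eq_mul]
        ring
      · rw [if_neg hadj]
        congr 1
        have hu : u ∉ G.neighborFinset v := by
          rw [SimpleGraph.mem_neighborFinset]
          exact fun e => hadj e.symm
        set s := G.neighborFinset v with hs
        rw [← Finset.sum_filter_add_sum_filter_not s (fun w => G.Adj u w)]
        have hfil : s.filter (fun w => G.Adj u w) = (G.commonNeighbors u v).toFinset := by
          ext w
          simp only [hs, Finset.mem_filter, SimpleGraph.mem_neighborFinset,
            Set.mem_toFinset, SimpleGraph.mem_commonNeighbors]
          tauto
        have hcard1 : (s.filter (fun w => G.Adj u w)).card = μ := by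
          rw [hfil, Set.toFinset_card, h.of_not_adj huv hadj]
        have hB : ∀ w ∈ s.filter (fun w => G.Adj u w), (M ^ n) u w = B := by
          intro w hw
          rw [Finset.mem_filter] at hw
          rw [hn, if_neg (G.ne_of_adj hw.2), if_pos hw.2]
        have hC : ∀ w ∈ s.filter (fun w => ¬ G.Adj u w), (M ^ n) u w = C := by
          intro w hw
          rw [Finset.mem_filter] at hw
          have hwne : u ≠ w := fun e => hu (e ▸ hw.1)
          rw [hn, if_neg hwne, if_neg hw.2]
        have hcard2 : (s.filter (fun w => ¬ G.Adj u w)).card = k - μ := by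
          have := Finset.card_filter_add_card_filter_not
            (s := s) (p := fun w => G.Adj u w)
          have hscard : s.card = k := by
            rw [hs, G.card_neighborFinset_eq_degree, h.regular v]
          omega
        rw [Finset.sum_congr rfl hB, Finset.sum_congr rfl hC,
          Finset.sum_const, Finset.sum_const, hcard1, hcard2,
          nsmul_eq_mul, nsmul_eq_mul]

/-- In a strongly regular graph, every vertex sees the same multiset of full RRWP
profiles: for any two vertices `u, u'`, the multiset over `v` of the sequences
`n ↦ (Mⁿ)_{u,v}` (where `M = k⁻¹ • A` is the random-walk matrix) equals the corresponding
multiset for `u'`.  Hence the GD-WL colouring based on RRWP is constant across vertices. -/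
theorem srg_rrwp_profile_multiset_eq
    {V : Type*} [Fintype V] [DecidableEq V]
    (G : SimpleGraph V) [DecidableRel G.Adj]
    (N k ℓ μ : ℕ) (hk : 1 ≤ k) (h : G.IsSRGWith N k ℓ μ)
    (M : Matrix V V ℝ) (hM : M = (k : ℝ)⁻¹ • G.adjMatrix ℝ) :
    ∀ u u' : V,
      (Finset.univ.val.map fun v : V => (fun n : ℕ => (M ^ n) u v)) =
      (Finset.univ.val.map fun v : V => (fun n : ℕ => (M ^ n) u' v)) := by
  obtain ⟨A, B, C, habc⟩ :
      ∃ A B C : ℕ → ℝ, ∀ (n : ℕ) (u v : V),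
        (M ^ n) u v = if u = v then A n else if G.Adj u v then B n else C n := by
    choose A B C habc using srg_pow_entry_cases G N k ℓ μ hk h M hM
    exact ⟨A, B, C, habc⟩
  set F : Fin 3 → ℕ → ℝ :=
    fun i n => if i = 0 then A n else if i = 1 then B n else C n with hF
  set cls : V → V → Fin 3 :=
    fun u v => if u = v then 0 else if G.Adj u v then 1 else 2 with hcls
  have hprof : ∀ u v : V, (fun n : ℕ => (M ^ n) u v) = F (cls u v) := by
    intro u v
    funext n
    rw [habc, hF, hcls]
    by_cases h1 : u = v
    · simp [h1]
    · by_cases h2 : G.Adj u v <;> simp [h1, h2]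
  have hcount : ∀ (u : V) (i : Fin 3),
      Multiset.count i (Finset.univ.val.map (cls u)) =
      if i = 0 then 1 else if i = 1 then k else Fintype.card V - 1 - k := by
    intro u i
    rw [Multiset.count_map]
    have : Multiset.card (Multiset.filter (fun v => i = cls u v) Finset.univ.val) =
        (Finset.univ.filter (fun v => i = cls u v)).card := rfl
    rw [this]
    fin_cases i
    · show (Finset.univ.filter (fun v => (0 : Fin 3) = cls u v)).card = 1
      have : Finset.univ.filter (fun v => (0 : Fin 3) = cls u v) = {u} := by
        ext v
        simp only [Finset.mem_filter, Finset.mem_univ, true_and, Finset.mem_singleton,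
          hcls]
        by_cases h1 : u = v
        · simp [h1]
        · by_cases h2 : G.Adj u v <;> simp [h1, h2, Ne.symm h1] <;> decide
      rw [this, Finset.card_singleton]
    · show (Finset.univ.filter (fun v => (1 : Fin 3) = cls u v)).card = k
      have : Finset.univ.filter (fun v => (1 : Fin 3) = cls u v) = G.neighborFinset u := by
        ext v
        simp only [Finset.mem_filter, Finset.mem_univ, true_and,
          SimpleGraph.mem_neighborFinset, hcls]
        by_cases h1 : u = v
        · simp only [if_pos h1]
          constructor
          · intro hh; exact absurd hh (by decide)
          · intro hh; exact absurd hh (h1 ▸ G.irrefl)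
        · by_cases h2 : G.Adj u v <;> simp [h1, h2] <;> decide
      rw [this, G.card_neighborFinset_eq_degree, h.regular u]
    · show (Finset.univ.filter (fun v => (2 : Fin 3) = cls u v)).card = Fintype.card V - 1 - k
      have : Finset.univ.filter (fun v => (2 : Fin 3) = cls u v) =
          (({u} : Finset V) ∪ G.neighborFinset u)ᶜ := by
        ext v
        simp only [Finset.mem_filter, Finset.mem_univ, true_and, Finset.mem_compl,
          Finset.mem_union, Finset.mem_singleton, SimpleGraph.mem_neighborFinset, hcls]
        by_cases h1 : u = v
        · simp only [if_pos h1]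
          constructor
          · intro hh; exact absurd hh (by decide)
          · intro hh; exact absurd (Or.inl h1.symm) hh
        · by_cases h2 : G.Adj u v
          · simp only [if_neg h1, if_pos h2]
            constructor
            · intro hh; exact absurd hh (by decide)
            · intro hh; exact absurd (Or.inr h2) hh
          · simp only [if_neg h1, if_neg h2]
            constructor
            · intro _; rintro (e | e)
              · exact h1 e.symm
              · exact h2 e
            · intro _; trivial
      rw [this, Finset.card_compl, Finset.card_union_of_disjoint, Finset.card_singleton,
        G.card_neighborFinset_eq_degree, h.regular u]
      · omega
      · simp [Finset.disjoint_singleton_left]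
  intro u u'
  have h1 : ∀ u : V, (Finset.univ.val.map fun v : V => (fun n : ℕ => (M ^ n) u v)) =
      (Finset.univ.val.map (cls u)).map F := by
    intro u
    rw [Multiset.map_map]
    exact Multiset.map_congr rfl fun v _ => hprof u v
  rw [h1 u, h1 u']
  congr 1
  refine Multiset.ext.mpr fun i => ?_
  rw [hcount u i, hcount u' i]
end
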